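/- For odd n ≥ 5 and 4 ≤ k ≤ 2n − 6, every graph G on n vertices with mp(G) = k has at least n(n−1)k/(4n−6) edges. -/
import Mathlib


open SimpleGraph Finset

/-- An almost-perfect matching: a matching covering all vertices except exactly one. -/
def SimpleGraph.Subgraph.IsAlmostPerfectMatching {V : Type*} {G : SimpleGraph V}
    (M : G.Subgraph) : Prop :=
  M.IsMatching ∧ ∃ v : V, M.verts = {v}ᶜ

/-- `G` has a perfect matching or an almost-perfect matching. -/
def SimpleGraph.HasGoodMatching {V : Type*} (G : SimpleGraph V) : Prop :=
  (∃ M : G.Subgraph, M.IsPerfectMatching) ∨ (∃ M : G.Subgraph, M.IsAlmostPerfectMatching)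

/-- The matching preclusion number of `G`. -/
noncomputable def SimpleGraph.mp {V : Type*} [Fintype V] (G : SimpleGraph V) : ℕ :=
  sInf { k | ∃ F : Finset (Sym2 V), ↑F ⊆ G.edgeSet ∧ F.card = k ∧
    ¬ (G.deleteEdges ↑F).HasGoodMatching }

lemma aux_noGood {n : ℕ} (G : SimpleGraph (Fin n)) [DecidableRel G.Adj]
    (u v : Fin n) (huv : u ≠ v) :
    ¬ (G.deleteEdges ↑(G.incidenceFinset u ∪ G.incidenceFinset v)).HasGoodMatching := by
  set F := G.incidenceFinset u ∪ G.incidenceFinset v with hF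
  have iso : ∀ x w : Fin n, x = u ∨ x = v → ¬ (G.deleteEdges ↑F).Adj x w := by
    rintro x w hx hadj
    rw [SimpleGraph.deleteEdges_adj] at hadj
    refine hadj.2 ?_
    have hmem : s(x, w) ∈ G.incidenceSet x := (G.mem_incidenceSet x w).2 hadj.1
    simp only [hF, Finset.coe_union, Set.mem_union, Finset.mem_coe,
      SimpleGraph.mem_incidenceFinset]
    rcases hx with rfl | rfl
    · exact Or.inl hmem
    · exact Or.inr hmem
  rintro (⟨M, hM, hsp⟩ | ⟨M, hM, x, hx⟩)
  · obtain ⟨w, hw, -⟩ := hM (hsp u)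
    exact iso u w (Or.inl rfl) (M.adj_sub hw)
  · have hmemv : u ∈ M.verts ∨ v ∈ M.verts := by
      rw [hx]
      by_cases hux : u = x
      · right
        simp only [Set.mem_compl_iff, Set.mem_singleton_iff]
        exact fun hvx => huv (hux ▸ hvx ▸ rfl)
      · left
        simpa only [Set.mem_compl_iff, Set.mem_singleton_iff] using hux
    rcases hmemv with hu | hv
    · obtain ⟨w, hw, -⟩ := hM hu
      exact iso u w (Or.inl rfl) (M.adj_sub hw)
    · obtain ⟨w, hw, -⟩ := hM hv
      exact iso v w (Or.inr rfl) (M.adj_sub hw)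

lemma aux_sub {n : ℕ} (G : SimpleGraph (Fin n)) [DecidableRel G.Adj] (u v : Fin n) :
    ↑(G.incidenceFinset u ∪ G.incidenceFinset v) ⊆ G.edgeSet := by
  intro e he
  simp only [Finset.coe_union, Set.mem_union, Finset.mem_coe,
    SimpleGraph.mem_incidenceFinset] at he
  rcases he with h | h
  · exact G.incidenceSet_subset _ h
  · exact G.incidenceSet_subset _ h

lemma aux_key {n k : ℕ} (G : SimpleGraph (Fin n)) [DecidableRel G.Adj]
    (h : G.mp = k) (u v : Fin n) (huv : u ≠ v) :
    k + (if G.Adj u v then 1 else 0) ≤ G.degree u + G.degree v := by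
  by_contra hcon
  push_neg at hcon
  set F := G.incidenceFinset u ∪ G.incidenceFinset v with hF
  have hcard : F.card < k := by
    have h1 : F.card + (G.incidenceFinset u ∩ G.incidenceFinset v).card
        = G.degree u + G.degree v := by
      rw [hF, Finset.card_union_add_card_inter,
        G.card_incidenceFinset_eq_degree, G.card_incidenceFinset_eq_degree]
    by_cases hadj : G.Adj u v
    · have h2 : s(u, v) ∈ G.incidenceFinset u ∩ G.incidenceFinset v := by
        simp only [Finset.mem_inter, SimpleGraph.mem_incidenceFinset]
        exact ⟨(G.mem_incidenceSet u v).2 hadj, G.mk'_mem_incidenceSet_right_iff.2 hadj⟩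
      have h3 : 1 ≤ (G.incidenceFinset u ∩ G.incidenceFinset v).card :=
        Finset.card_pos.2 ⟨_, h2⟩
      simp only [hadj, if_true] at hcon
      omega
    · simp only [hadj, if_false] at hcon
      omega
  have hmem : F.card ∈ { j | ∃ F : Finset (Sym2 (Fin n)), ↑F ⊆ G.edgeSet ∧ F.card = j ∧
      ¬ (G.deleteEdges ↑F).HasGoodMatching } :=
    ⟨F, aux_sub G u v, rfl, aux_noGood G u v huv⟩
  have := Nat.sInf_le hmem
  rw [SimpleGraph.mp] at h
  omega

theorem stmt17 (n k : ℕ) (hn : Odd n) (h5 : 5 ≤ n) (hk : 4 ≤ k)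
    (hk2 : k ≤ 2 * n - 6) (G : SimpleGraph (Fin n)) (h : G.mp = k) :
    (n * (n - 1) * k : ℝ) / (4 * n - 6) ≤ (G.edgeSet.ncard : ℝ) := by
  classical
  set m := G.edgeFinset.card with hm
  have hncard : G.edgeSet.ncard = m := by
    rw [hm, SimpleGraph.edgeFinset, Set.ncard_eq_toFinset_card']
  have hdegsum : ∑ v : Fin n, G.degree v = 2 * m := G.sum_degrees_eq_twice_card_edges
  have hdeg : ∀ u : Fin n, G.degree u = ∑ v ∈ Finset.univ.erase u, (if G.Adj u v then 1 else 0) := by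
    intro u
    rw [Finset.sum_erase _ (by simp)]
    rw [SimpleGraph.degree, SimpleGraph.neighborFinset_eq_filter, Finset.card_filter]
  have hcarde : ∀ u : Fin n, (Finset.univ.erase u).card = n - 1 := by
    intro u
    rw [Finset.card_erase_of_mem (Finset.mem_univ u), Finset.card_univ, Fintype.card_fin]
  -- lower bound on the double sum
  have hlow : n * (n - 1) * k + 2 * m ≤
      ∑ u : Fin n, ∑ v ∈ Finset.univ.erase u, (G.degree u + G.degree v) := by
    have step : ∀ u : Fin n, (n - 1) * k + G.degree u ≤
        ∑ v ∈ Finset.univ.erase u, (G.degree u + G.degree v) := by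
      intro u
      calc (n - 1) * k + G.degree u
          = ∑ v ∈ Finset.univ.erase u, (k + if G.Adj u v then 1 else 0) := by
            rw [Finset.sum_add_distrib, Finset.sum_const, hcarde u, smul_eq_mul, ← hdeg u]
        _ ≤ ∑ v ∈ Finset.univ.erase u, (G.degree u + G.degree v) := by
            refine Finset.sum_le_sum ?_
            intro v hv
            exact aux_key G h u v (fun e => (Finset.mem_erase.1 hv).1 e.symm)
    calc n * (n - 1) * k + 2 * m = ∑ _u : Fin n, (n - 1) * k + ∑ u : Fin n, G.degree u := by
          rw [hdegsum, Finset.sum_const, Finset.card_univ, Fintype.card_fin, smul_eq_mul]; ring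
      _ = ∑ u : Fin n, ((n - 1) * k + G.degree u) := by rw [Finset.sum_add_distrib]
      _ ≤ _ := Finset.sum_le_sum fun u _ => step u
  -- evaluate the double sum
  have heval : ∑ u : Fin n, ∑ v ∈ Finset.univ.erase u, (G.degree u + G.degree v)
      = 4 * m * (n - 1) := by
    have h1 : ∑ u : Fin n, ∑ v ∈ Finset.univ.erase u, G.degree u = (n - 1) * (2 * m) := by
      rw [← hdegsum, Finset.mul_sum]
      exact Finset.sum_congr rfl fun u _ => by rw [Finset.sum_const, hcarde u, smul_eq_mul]
    have h2 : ∑ u : Fin n, ∑ v ∈ Finset.univ.erase u, G.degree v = (n - 1) * (2 * m) := by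
      rw [Finset.sum_comm' (t' := Finset.univ) (s' := fun v => Finset.univ.erase v)
        (by intro x y; simp [Finset.mem_erase, ne_comm])]
      rw [← hdegsum, Finset.mul_sum]
      exact Finset.sum_congr rfl fun u _ => by rw [Finset.sum_const, hcarde u, smul_eq_mul]
    calc ∑ u : Fin n, ∑ v ∈ Finset.univ.erase u, (G.degree u + G.degree v)
        = ∑ u : Fin n, (∑ v ∈ Finset.univ.erase u, G.degree u
            + ∑ v ∈ Finset.univ.erase u, G.degree v) := by
          exact Finset.sum_congr rfl fun u _ => Finset.sum_add_distrib
      _ = (n - 1) * (2 * m) + (n - 1) * (2 * m) := by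
          rw [Finset.sum_add_distrib, h1, h2]
      _ = 4 * m * (n - 1) := by ring
  have hmain : n * (n - 1) * k + 2 * m ≤ 4 * m * (n - 1) := heval ▸ hlow
  -- pass to the reals
  have hn1 : (1 : ℕ) ≤ n := by omega
  have hmainR : (n : ℝ) * ((n : ℝ) - 1) * k + 2 * m ≤ 4 * m * ((n : ℝ) - 1) := by
    have := hmain
    have hcast : ((n - 1 : ℕ) : ℝ) = (n : ℝ) - 1 := by
      rw [Nat.cast_sub hn1, Nat.cast_one]
    calc (n : ℝ) * ((n : ℝ) - 1) * k + 2 * m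
        = ((n * (n - 1) * k + 2 * m : ℕ) : ℝ) := by
          push_cast [hcast]; ring
      _ ≤ ((4 * m * (n - 1) : ℕ) : ℝ) := Nat.cast_le.2 hmain
      _ = 4 * m * ((n : ℝ) - 1) := by push_cast [hcast]; ring
  rw [hncard]
  rw [div_le_iff₀ (by
    have : (5 : ℝ) ≤ (n : ℝ) := by exact_mod_cast h5
    linarith)]
  nlinarith [hmainR]
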